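/- Let N and T_1,...,T_n be non-negative integers, and for each i in [n] let S_i : {0,...,T_i} → {0,...,N} satisfy: (i) |S_i(t) - S_i(t-1)| = 1 for all t in [T_i]; (ii) 0 ≤ S_i(t) < N for all 0 ≤ t < T_i; (iii) S_i(0) = 0 and S_i(T_i) = N. Then there exists T ∈ ℕ and functions f_i : {0,...,T} → {0,...,T_i} for 1 ≤ i ≤ n such that: (a) |f_i(t) - f_i(t-1)| = 1 for all t in [T]; (b) S_1(f_1(t)) = S_j(f_j(t)) for all t in {0,...,T} and all 1 ≤ j ≤ n; (c) S_1(f_1(0)) = 0 and S_1(f_1(T)) = N. -/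

import Mathlib

open Finset

/-- Access to consecutive elements of a chain via `getD`. -/
lemma chain_getD {α : Type*} {r : α → α → Prop} (d : α) :
    ∀ (a : α) (l : List α), List.Chain r a l → ∀ t, t + 1 ≤ l.length →
      r ((a :: l).getD t d) ((a :: l).getD (t + 1) d) := by
  intro a l
  induction l generalizing a with
  | nil => intro _ t ht; simp at ht
  | cons b l ih =>
    intro hchain t ht
    rcases List.chain_cons.mp hchain with ⟨hab, hbl⟩
    cases t with
    | zero => simpa using hab
    | succ t =>
      have := ih b hbl t (by simpa using ht)
      simpa using this

private lemma even_double_sum {α : Type*} {s : Finset (α × α)} {g : α × α → ℕ}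
    (ι : α → ℕ) (hinj : Function.Injective ι)
    (hs : ∀ p ∈ s, Prod.swap p ∈ s)
    (hg : ∀ p, g (Prod.swap p) = g p)
    (hdiag : ∀ p ∈ s, p.1 = p.2 → g p = 0) :
    Even (∑ p ∈ s, g p) := by
  classical
  have hsub : s.filter (fun p => ι p.2 < ι p.1) ⊆ s.filter (fun p => ¬ ι p.1 < ι p.2) := by
    intro p hp
    simp only [Finset.mem_filter] at hp ⊢
    refine ⟨hp.1, ?_⟩
    have h2 := hp.2
    omega
  have h1 : ∑ p ∈ s.filter (fun p => ι p.2 < ι p.1), g p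
      = ∑ p ∈ s.filter (fun p => ¬ ι p.1 < ι p.2), g p := by
    refine Finset.sum_subset hsub ?_
    intro p hp hnp
    simp only [Finset.mem_filter, not_lt] at hp
    have h3 : ¬ ι p.2 < ι p.1 := fun hc => hnp (Finset.mem_filter.mpr ⟨hp.1, hc⟩)
    refine hdiag p hp.1 (hinj ?_)
    have h2 := hp.2
    omega
  have h2 : ∑ p ∈ s.filter (fun p => ι p.2 < ι p.1), g p
      = ∑ p ∈ s.filter (fun p => ι p.1 < ι p.2), g p := by
    refine Finset.sum_nbij' (fun p => Prod.swap p) (fun p => Prod.swap p) ?_ ?_ ?_ ?_ ?_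
    · intro p hp
      simp only [Finset.mem_filter] at hp ⊢
      exact ⟨hs p hp.1, hp.2⟩
    · intro p hp
      simp only [Finset.mem_filter] at hp ⊢
      exact ⟨hs p hp.1, hp.2⟩
    · intro p _; simp
    · intro p _; simp
    · intro p _; exact (hg p).symm
  have h3 := Finset.sum_filter_add_sum_filter_not s (fun p => ι p.1 < ι p.2) g
  have htot : ∑ p ∈ s, g p = ∑ p ∈ s.filter (fun p => ι p.1 < ι p.2), g p
      + ∑ p ∈ s.filter (fun p => ι p.1 < ι p.2), g p := by
    rw [← h3, ← h2, h1]
  rw [htot]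
  exact Even.add_self _

/-- Handshake: an odd-degree vertex is connected to another odd-degree vertex. -/
lemma exists_other_odd_degree
    (V : Finset (ℕ × ℕ)) (adj : ℕ × ℕ → ℕ × ℕ → Prop) [DecidableRel adj]
    (hsym : ∀ x y, adj x y → adj y x)
    (hirr : ∀ x, ¬ adj x x)
    (hmem : ∀ x y, adj x y → y ∈ V)
    (x0 : ℕ × ℕ) (hx0 : x0 ∈ V)
    (hodd : Odd (V.filter (adj x0)).card) :
    ∃ y ∈ V, y ≠ x0 ∧ Relation.ReflTransGen adj x0 y ∧ Odd (V.filter (adj y)).card := by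
  classical
  set R : Finset (ℕ × ℕ) := V.filter (fun y => Relation.ReflTransGen adj x0 y) with hR
  have hx0R : x0 ∈ R := by
    rw [hR, Finset.mem_filter]
    exact ⟨hx0, Relation.ReflTransGen.refl⟩
  have hRsub : R ⊆ V := Finset.filter_subset _ _
  have hclosed : ∀ y ∈ R, ∀ z, adj y z → z ∈ R := by
    intro y hy z hz
    rw [hR, Finset.mem_filter] at hy ⊢
    exact ⟨hmem _ _ hz, hy.2.tail hz⟩
  have hdeg : ∀ y ∈ R, V.filter (adj y) = R.filter (adj y) := by
    intro y hy
    ext z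
    simp only [Finset.mem_filter]
    constructor
    · rintro ⟨_, hzy⟩; exact ⟨hclosed y hy z hzy, hzy⟩
    · rintro ⟨hzR, hzy⟩; exact ⟨hRsub hzR, hzy⟩
  -- sum of degrees over R is even
  have hsum : ∑ y ∈ R, (V.filter (adj y)).card
      = ∑ p ∈ R ×ˢ R, (if adj p.1 p.2 then 1 else 0) := by
    rw [Finset.sum_product]
    refine Finset.sum_congr rfl fun y hy => ?_
    rw [hdeg y hy, Finset.card_filter]
  have heven : Even (∑ y ∈ R, (V.filter (adj y)).card) := by
    rw [hsum]
    apply even_double_sum (fun p => Nat.pair p.1 p.2)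
      (fun p q h => by
        have h1 := congrArg Nat.unpair h
        simp only [Nat.unpair_pair] at h1
        exact Prod.ext (congrArg Prod.fst h1) (congrArg Prod.snd h1))
    · intro p hp
      rw [Finset.mem_product] at hp ⊢
      exact ⟨hp.2, hp.1⟩
    · intro p
      simp only [Prod.fst_swap, Prod.snd_swap]
      by_cases h : adj p.1 p.2
      · simp [h, hsym _ _ h]
      · have h' : ¬ adj p.2 p.1 := fun hh => h (hsym _ _ hh)
        simp [h, h']
    · intro p _ hp
      rw [if_neg]
      intro hc
      rw [hp] at hc
      exact hirr p.2 hc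
  -- parity transfer to the count of odd-degree vertices
  have hcard : Even ((R.filter (fun y => Odd ((V.filter (adj y)).card))).card) := by
    have hmod : (∑ y ∈ R, (V.filter (adj y)).card) % 2
        = ((R.filter fun y => Odd ((V.filter (adj y)).card)).card) % 2 := by
      rw [Finset.card_filter, Finset.sum_nat_mod]
      congr 1
      refine Finset.sum_congr rfl fun y _ => ?_
      rcases Nat.even_or_odd ((V.filter (adj y)).card) with h | h
      · rw [Nat.even_iff.mp h, if_neg (Nat.not_odd_iff_even.mpr h)]
      · rw [Nat.odd_iff.mp h, if_pos h]
    rw [Nat.even_iff, ← hmod, ← Nat.even_iff]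
    exact heven
  have hx0f : x0 ∈ R.filter (fun y => Odd ((V.filter (adj y)).card)) := by
    rw [Finset.mem_filter]; exact ⟨hx0R, hodd⟩
  have h1lt : 1 < (R.filter (fun y => Odd ((V.filter (adj y)).card))).card := by
    obtain ⟨k, hk⟩ := hcard
    have : 0 < (R.filter (fun y => Odd ((V.filter (adj y)).card))).card :=
      Finset.card_pos.mpr ⟨x0, hx0f⟩
    omega
  obtain ⟨y, hyf, hyne⟩ := Finset.exists_mem_ne h1lt x0
  rw [Finset.mem_filter] at hyf
  have hyR := hyf.1
  rw [hR, Finset.mem_filter] at hyR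
  exact ⟨y, hyR.1, hyne, hyR.2, hyf.2⟩


/-- one step of a walk towards a neighbor index -/
lemma walk_nbr {T : ℕ} {S : ℕ → ℕ}
    (hstep : ∀ t, 1 ≤ t → t ≤ T → S t = S (t-1) + 1 ∨ S (t-1) = S t + 1)
    {a x : ℕ} (hx : x = a + 1 ∨ a = x + 1) (hxT : x ≤ T) (haT : a ≤ T) :
    S x = S a + 1 ∨ S x + 1 = S a := by
  rcases hx with rfl | hx
  · have h := hstep (a+1) (by omega) hxT
    simp only [Nat.add_sub_cancel] at h
    omega
  · have h := hstep a (by omega) haT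
    rw [show a - 1 = x from by omega] at h
    omega

def WAdj (T1 T2 : ℕ) (S1 S2 : ℕ → ℕ) (p q : ℕ × ℕ) : Prop :=
  (q.1 = p.1 + 1 ∨ p.1 = q.1 + 1) ∧ (q.2 = p.2 + 1 ∨ p.2 = q.2 + 1) ∧
  p.1 ≤ T1 ∧ p.2 ≤ T2 ∧ q.1 ≤ T1 ∧ q.2 ≤ T2 ∧ S1 p.1 = S2 p.2 ∧ S1 q.1 = S2 q.2

instance (T1 T2 : ℕ) (S1 S2 : ℕ → ℕ) (p q : ℕ × ℕ) : Decidable (WAdj T1 T2 S1 S2 p q) := by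
  unfold WAdj; infer_instance

def WV (T1 T2 : ℕ) : Finset (ℕ × ℕ) := Finset.range (T1+1) ×ˢ Finset.range (T2+1)

lemma mem_filter_wadj {T1 T2 : ℕ} {S1 S2 : ℕ → ℕ} {p q : ℕ × ℕ} :
    q ∈ (WV T1 T2).filter (WAdj T1 T2 S1 S2 p) ↔ WAdj T1 T2 S1 S2 p q := by
  simp only [WV, Finset.mem_filter, Finset.mem_product, Finset.mem_range]
  constructor
  · rintro ⟨_, h⟩; exact h
  · intro h
    obtain ⟨-, -, -, -, h5, h6, -, -⟩ := id h
    exact ⟨⟨by omega, by omega⟩, h⟩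

lemma wadj_symm {T1 T2 : ℕ} {S1 S2 : ℕ → ℕ} (p q : ℕ × ℕ) (h : WAdj T1 T2 S1 S2 p q) :
    WAdj T1 T2 S1 S2 q p := by
  obtain ⟨h1, h2, h3, h4, h5, h6, h7, h8⟩ := h
  exact ⟨h1.symm, h2.symm, h5, h6, h3, h4, h8, h7⟩

lemma wadj_irrefl {T1 T2 : ℕ} {S1 S2 : ℕ → ℕ} (p : ℕ × ℕ) : ¬ WAdj T1 T2 S1 S2 p p := by
  rintro ⟨h1, -⟩; omega

lemma wadj_mem {T1 T2 : ℕ} {S1 S2 : ℕ → ℕ} (p q : ℕ × ℕ) (h : WAdj T1 T2 S1 S2 p q) :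
    q ∈ WV T1 T2 := by
  obtain ⟨-, -, -, -, h5, h6, -⟩ := h
  simp only [WV, Finset.mem_product, Finset.mem_range]
  omega

private lemma even_inds (c x1 x2 y1 y2 : ℕ)
    (hx1 : x1 = c + 1 ∨ x1 + 1 = c) (hx2 : x2 = c + 1 ∨ x2 + 1 = c)
    (hy1 : y1 = c + 1 ∨ y1 + 1 = c) (hy2 : y2 = c + 1 ∨ y2 + 1 = c) :
    Even (((if x1 = y1 then 1 else 0) + (if x1 = y2 then 1 else 0))
      + ((if x2 = y1 then 1 else 0) + (if x2 = y2 then 1 else 0))) := by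
  rw [Nat.even_iff]
  rcases hx1 with h1|h1 <;> rcases hx2 with h2|h2 <;> rcases hy1 with h3|h3 <;>
    rcases hy2 with h4|h4 <;> split_ifs <;> omega

section DegLemmas

variable {N T1 T2 : ℕ} {S1 S2 : ℕ → ℕ}

lemma deg_00
    (hstep1 : ∀ t, 1 ≤ t → t ≤ T1 → S1 t = S1 (t-1) + 1 ∨ S1 (t-1) = S1 t + 1)
    (hstep2 : ∀ t, 1 ≤ t → t ≤ T2 → S2 t = S2 (t-1) + 1 ∨ S2 (t-1) = S2 t + 1)
    (h01 : S1 0 = 0) (h02 : S2 0 = 0)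
    (hT1pos : 0 < T1) (hT2pos : 0 < T2) :
    ((WV T1 T2).filter (WAdj T1 T2 S1 S2 (0,0))).card = 1 := by
  have hS11 : S1 1 = 1 := by
    have h := walk_nbr (a := 0) (x := 1) hstep1 (by omega) hT1pos (by omega)
    omega
  have hS21 : S2 1 = 1 := by
    have h := walk_nbr (a := 0) (x := 1) hstep2 (by omega) hT2pos (by omega)
    omega
  have hset : (WV T1 T2).filter (WAdj T1 T2 S1 S2 (0,0)) = {((1:ℕ),(1:ℕ))} := by
    ext ⟨x, y⟩
    rw [mem_filter_wadj]
    simp only [WAdj, Finset.mem_singleton, Prod.mk.injEq]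
    constructor
    · intro h; omega
    · rintro ⟨rfl, rfl⟩; omega
  rw [hset, Finset.card_singleton]

lemma deg_final
    (hbd1 : ∀ t ≤ T1, S1 t ≤ N) (hbd2 : ∀ t ≤ T2, S2 t ≤ N)
    (hstep1 : ∀ t, 1 ≤ t → t ≤ T1 → S1 t = S1 (t-1) + 1 ∨ S1 (t-1) = S1 t + 1)
    (hstep2 : ∀ t, 1 ≤ t → t ≤ T2 → S2 t = S2 (t-1) + 1 ∨ S2 (t-1) = S2 t + 1)
    (hT1 : S1 T1 = N) (hT2 : S2 T2 = N)
    (hT1pos : 0 < T1) (hT2pos : 0 < T2) :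
    ((WV T1 T2).filter (WAdj T1 T2 S1 S2 (T1,T2))).card = 1 := by
  have hd1 : S1 (T1 - 1) + 1 = N := by
    have h := walk_nbr (a := T1) (x := T1 - 1) hstep1 (by omega) (by omega) (le_refl T1)
    have hb := hbd1 (T1-1) (by omega)
    omega
  have hd2 : S2 (T2 - 1) + 1 = N := by
    have h := walk_nbr (a := T2) (x := T2 - 1) hstep2 (by omega) (by omega) (le_refl T2)
    have hb := hbd2 (T2-1) (by omega)
    omega
  have hset : (WV T1 T2).filter (WAdj T1 T2 S1 S2 (T1,T2)) = {(T1-1, T2-1)} := by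
    ext ⟨x, y⟩
    rw [mem_filter_wadj]
    simp only [WAdj, Finset.mem_singleton, Prod.mk.injEq]
    constructor
    · intro h; omega
    · rintro ⟨rfl, rfl⟩; omega
  rw [hset, Finset.card_singleton]

lemma deg_left_edge
    (hstep1 : ∀ t, 1 ≤ t → t ≤ T1 → S1 t = S1 (t-1) + 1 ∨ S1 (t-1) = S1 t + 1)
    (hstep2 : ∀ t, 1 ≤ t → t ≤ T2 → S2 t = S2 (t-1) + 1 ∨ S2 (t-1) = S2 t + 1)
    (h01 : S1 0 = 0) (hT1pos : 0 < T1)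
    {b : ℕ} (hb0 : 0 < b) (hbT : b < T2) (hm : S1 0 = S2 b) :
    ((WV T1 T2).filter (WAdj T1 T2 S1 S2 (0,b))).card = 2 := by
  have hS2b : S2 b = 0 := by omega
  have hS11 : S1 1 = 1 := by
    have h := walk_nbr (a := 0) (x := 1) hstep1 (by omega) hT1pos (by omega)
    omega
  have hSp : S2 (b+1) = 1 := by
    have h := walk_nbr (a := b) (x := b+1) hstep2 (by omega) (by omega) (by omega)
    omega
  have hSm : S2 (b-1) = 1 := by
    have h := walk_nbr (a := b) (x := b-1) hstep2 (by omega) (by omega) (by omega)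
    omega
  have hset : (WV T1 T2).filter (WAdj T1 T2 S1 S2 (0,b)) = {((1:ℕ), b-1), ((1:ℕ), b+1)} := by
    ext ⟨x, y⟩
    rw [mem_filter_wadj]
    simp only [WAdj, Finset.mem_insert, Finset.mem_singleton, Prod.mk.injEq]
    constructor
    · intro h; omega
    · rintro (⟨rfl, rfl⟩ | ⟨rfl, rfl⟩) <;> omega
  rw [hset, Finset.card_pair (by simp only [ne_eq, Prod.mk.injEq]; omega)]

lemma deg_bottom_edge
    (hstep1 : ∀ t, 1 ≤ t → t ≤ T1 → S1 t = S1 (t-1) + 1 ∨ S1 (t-1) = S1 t + 1)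
    (hstep2 : ∀ t, 1 ≤ t → t ≤ T2 → S2 t = S2 (t-1) + 1 ∨ S2 (t-1) = S2 t + 1)
    (h02 : S2 0 = 0) (hT2pos : 0 < T2)
    {a : ℕ} (ha0 : 0 < a) (haT : a < T1) (hm : S1 a = S2 0) :
    ((WV T1 T2).filter (WAdj T1 T2 S1 S2 (a,0))).card = 2 := by
  have hS1a : S1 a = 0 := by omega
  have hS21 : S2 1 = 1 := by
    have h := walk_nbr (a := 0) (x := 1) hstep2 (by omega) hT2pos (by omega)
    omega
  have hSp : S1 (a+1) = 1 := by
    have h := walk_nbr (a := a) (x := a+1) hstep1 (by omega) (by omega) (by omega)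
    omega
  have hSm : S1 (a-1) = 1 := by
    have h := walk_nbr (a := a) (x := a-1) hstep1 (by omega) (by omega) (by omega)
    omega
  have hset : (WV T1 T2).filter (WAdj T1 T2 S1 S2 (a,0)) = {(a-1, (1:ℕ)), (a+1, (1:ℕ))} := by
    ext ⟨x, y⟩
    rw [mem_filter_wadj]
    simp only [WAdj, Finset.mem_insert, Finset.mem_singleton, Prod.mk.injEq]
    constructor
    · intro h; omega
    · rintro (⟨rfl, rfl⟩ | ⟨rfl, rfl⟩) <;> omega
  rw [hset, Finset.card_pair (by simp only [ne_eq, Prod.mk.injEq]; omega)]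

lemma deg_interior
    (hstep1 : ∀ t, 1 ≤ t → t ≤ T1 → S1 t = S1 (t-1) + 1 ∨ S1 (t-1) = S1 t + 1)
    (hstep2 : ∀ t, 1 ≤ t → t ≤ T2 → S2 t = S2 (t-1) + 1 ∨ S2 (t-1) = S2 t + 1)
    {a b : ℕ} (ha0 : 0 < a) (haT : a < T1) (hb0 : 0 < b) (hbT : b < T2)
    (hm : S1 a = S2 b) :
    Even ((WV T1 T2).filter (WAdj T1 T2 S1 S2 (a,b))).card := by
  have d1m : S1 (a-1) = S1 a + 1 ∨ S1 (a-1) + 1 = S1 a :=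
    walk_nbr (a := a) (x := a-1) hstep1 (by omega) (by omega) (by omega)
  have d1p : S1 (a+1) = S1 a + 1 ∨ S1 (a+1) + 1 = S1 a :=
    walk_nbr (a := a) (x := a+1) hstep1 (by omega) (by omega) (by omega)
  have d2m : S2 (b-1) = S1 a + 1 ∨ S2 (b-1) + 1 = S1 a := by
    have h := walk_nbr (a := b) (x := b-1) hstep2 (by omega) (by omega) (by omega)
    omega
  have d2p : S2 (b+1) = S1 a + 1 ∨ S2 (b+1) + 1 = S1 a := by
    have h := walk_nbr (a := b) (x := b+1) hstep2 (by omega) (by omega) (by omega)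
    omega
  have hset : (WV T1 T2).filter (WAdj T1 T2 S1 S2 (a,b))
      = (({a-1, a+1} : Finset ℕ) ×ˢ ({b-1, b+1} : Finset ℕ)).filter
          (fun q => S1 q.1 = S2 q.2) := by
    ext ⟨x, y⟩
    rw [mem_filter_wadj]
    simp only [WAdj, Finset.mem_filter, Finset.mem_product, Finset.mem_insert,
      Finset.mem_singleton]
    constructor
    · intro h; omega
    · intro h; omega
  rw [hset, Finset.card_filter, Finset.sum_product,
    Finset.sum_pair (show a - 1 ≠ a + 1 by omega),
    Finset.sum_pair (show b - 1 ≠ b + 1 by omega),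
    Finset.sum_pair (show b - 1 ≠ b + 1 by omega)]
  exact even_inds (S1 a) _ _ _ _ d1m d1p d2m d2p

lemma deg_classify (hN : 0 < N)
    (hbd1 : ∀ t ≤ T1, S1 t ≤ N) (hbd2 : ∀ t ≤ T2, S2 t ≤ N)
    (hstep1 : ∀ t, 1 ≤ t → t ≤ T1 → S1 t = S1 (t-1) + 1 ∨ S1 (t-1) = S1 t + 1)
    (hstep2 : ∀ t, 1 ≤ t → t ≤ T2 → S2 t = S2 (t-1) + 1 ∨ S2 (t-1) = S2 t + 1)
    (hlt1 : ∀ t < T1, S1 t < N) (hlt2 : ∀ t < T2, S2 t < N)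
    (h01 : S1 0 = 0) (h02 : S2 0 = 0) (hT1 : S1 T1 = N) (hT2 : S2 T2 = N)
    (hT1pos : 0 < T1) (hT2pos : 0 < T2)
    (a b : ℕ) (ha : a ≤ T1) (hb : b ≤ T2)
    (hodd : Odd ((WV T1 T2).filter (WAdj T1 T2 S1 S2 (a,b))).card) :
    (a = 0 ∧ b = 0) ∨ (a = T1 ∧ b = T2) := by
  have hm : S1 a = S2 b := by
    by_contra hne
    have hempty : (WV T1 T2).filter (WAdj T1 T2 S1 S2 (a,b)) = ∅ := by
      rw [Finset.filter_eq_empty_iff]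
      intro q _ hadj
      exact hne hadj.2.2.2.2.2.2.1
    rw [hempty] at hodd
    simp at hodd
  by_cases hmN : S1 a = N
  · right
    have ha' : a = T1 := by
      by_contra haT
      exact absurd hmN (Nat.ne_of_lt (hlt1 a (lt_of_le_of_ne ha haT)))
    have hb' : b = T2 := by
      by_contra hbT
      exact absurd (hm ▸ hmN) (Nat.ne_of_lt (hlt2 b (lt_of_le_of_ne hb hbT)))
    exact ⟨ha', hb'⟩
  · have haT : a < T1 := lt_of_le_of_ne ha (fun h => hmN (h ▸ hT1))
    have hbT : b < T2 := lt_of_le_of_ne hb (fun h => hmN (by rw [hm, h, hT2]))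
    rcases Nat.eq_zero_or_pos a with rfl | ha0
    · rcases Nat.eq_zero_or_pos b with rfl | hb0
      · exact Or.inl ⟨rfl, rfl⟩
      · exfalso
        rw [deg_left_edge hstep1 hstep2 h01 hT1pos hb0 hbT hm] at hodd
        simp [Nat.odd_iff] at hodd
    · rcases Nat.eq_zero_or_pos b with rfl | hb0
      · exfalso
        rw [deg_bottom_edge hstep1 hstep2 h02 hT2pos ha0 haT hm] at hodd
        simp [Nat.odd_iff] at hodd
      · exact absurd hodd (by
          rw [Nat.not_odd_iff_even]
          exact deg_interior hstep1 hstep2 ha0 haT hb0 hbT hm)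

end DegLemmas

/-- Synchronization of two walks. -/
lemma two_sync (N T1 T2 : ℕ) (S1 S2 : ℕ → ℕ)
    (hbd1 : ∀ t ≤ T1, S1 t ≤ N) (hbd2 : ∀ t ≤ T2, S2 t ≤ N)
    (hstep1 : ∀ t, 1 ≤ t → t ≤ T1 → S1 t = S1 (t-1) + 1 ∨ S1 (t-1) = S1 t + 1)
    (hstep2 : ∀ t, 1 ≤ t → t ≤ T2 → S2 t = S2 (t-1) + 1 ∨ S2 (t-1) = S2 t + 1)
    (hlt1 : ∀ t < T1, S1 t < N) (hlt2 : ∀ t < T2, S2 t < N)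
    (h01 : S1 0 = 0) (h02 : S2 0 = 0) (hT1 : S1 T1 = N) (hT2 : S2 T2 = N) :
    ∃ (T' : ℕ) (f1 f2 : ℕ → ℕ),
      (∀ t ≤ T', f1 t ≤ T1) ∧ (∀ t ≤ T', f2 t ≤ T2) ∧
      (∀ t, 1 ≤ t → t ≤ T' → f1 t = f1 (t-1) + 1 ∨ f1 (t-1) = f1 t + 1) ∧
      (∀ t, 1 ≤ t → t ≤ T' → f2 t = f2 (t-1) + 1 ∨ f2 (t-1) = f2 t + 1) ∧
      (∀ t ≤ T', S1 (f1 t) = S2 (f2 t)) ∧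
      S1 (f1 0) = 0 ∧ S1 (f1 T') = N ∧ (∀ t < T', S1 (f1 t) < N) := by
  rcases Nat.eq_zero_or_pos N with hN | hN
  · refine ⟨0, fun _ => 0, fun _ => 0, ?_, ?_, ?_, ?_, ?_, ?_, ?_, ?_⟩
    · intro t _; dsimp only; omega
    · intro t _; dsimp only; omega
    · intro t h1 h2; dsimp only; omega
    · intro t h1 h2; dsimp only; omega
    · intro t _; dsimp only; omega
    · dsimp only; omega
    · dsimp only; omega
    · intro t ht; dsimp only; omega
  have hT1pos : 0 < T1 := by
    rcases Nat.eq_zero_or_pos T1 with h | h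
    · rw [h] at hT1; omega
    · exact h
  have hT2pos : 0 < T2 := by
    rcases Nat.eq_zero_or_pos T2 with h | h
    · rw [h] at hT2; omega
    · exact h
  -- handshake argument
  have hodd0 : Odd ((WV T1 T2).filter (WAdj T1 T2 S1 S2 (0,0))).card := by
    rw [deg_00 hstep1 hstep2 h01 h02 hT1pos hT2pos]
    exact odd_one
  have h00V : ((0:ℕ), (0:ℕ)) ∈ WV T1 T2 := by
    simp only [WV, Finset.mem_product, Finset.mem_range]; omega
  obtain ⟨y, hyV, hyne, hreach, hyodd⟩ :=
    exists_other_odd_degree (WV T1 T2) (WAdj T1 T2 S1 S2)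
      wadj_symm wadj_irrefl wadj_mem (0,0) h00V hodd0
  have hyVmem := hyV
  simp only [WV, Finset.mem_product, Finset.mem_range] at hyVmem
  have hyclass := deg_classify hN hbd1 hbd2 hstep1 hstep2 hlt1 hlt2 h01 h02 hT1 hT2
      hT1pos hT2pos y.1 y.2 (by omega) (by omega) (by simpa using hyodd)
  have hyEq : y = (T1, T2) := by
    rcases hyclass with ⟨h1, h2⟩ | ⟨h1, h2⟩
    · exfalso; exact hyne (Prod.ext h1 h2)
    · exact Prod.ext h1 h2
  rw [hyEq] at hreach
  -- extract a path
  obtain ⟨l, hchain, hlast⟩ := List.exists_isChain_cons_of_relationReflTransGen hreach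
  set F : ℕ → ℕ × ℕ := fun t => (((0:ℕ),(0:ℕ)) :: l).getD t (0,0) with hF
  have hF0 : F 0 = (0,0) := rfl
  have hstepF : ∀ t, t + 1 ≤ l.length → WAdj T1 T2 S1 S2 (F t) (F (t+1)) :=
    chain_getD (0,0) _ _ hchain
  have hlenF : F l.length = (T1, T2) := by
    have hlt : l.length < (((0:ℕ),(0:ℕ)) :: l).length := by simp
    show (((0:ℕ),(0:ℕ)) :: l).getD l.length (0,0) = (T1, T2)
    rw [List.getD_eq_getElem (hn := hlt), ← hlast, List.getLast_eq_getElem]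
    congr 1
  have hinv : ∀ t ≤ l.length, (F t).1 ≤ T1 ∧ (F t).2 ≤ T2 ∧ S1 (F t).1 = S2 (F t).2 := by
    intro t ht
    cases t with
    | zero =>
      rw [hF0]
      exact ⟨by omega, by omega, by rw [h01, h02]⟩
    | succ t =>
      obtain ⟨-, -, -, -, h5, h6, -, h8⟩ := hstepF t ht
      exact ⟨h5, h6, h8⟩
  have hexists : ∃ t, t ≤ l.length ∧ S1 (F t).1 = N := by
    refine ⟨l.length, le_refl _, ?_⟩
    rw [hlenF]
    exact hT1
  classical
  set T' := Nat.find hexists with hT'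
  obtain ⟨hT'le, hT'N⟩ := Nat.find_spec hexists
  have hT'min : ∀ t < T', S1 (F t).1 ≠ N := by
    intro t ht hc
    exact Nat.find_min hexists ht ⟨by omega, hc⟩
  have hT'len : T' ≤ l.length := hT'le
  refine ⟨T', fun t => (F t).1, fun t => (F t).2, ?_, ?_, ?_, ?_, ?_, ?_, ?_, ?_⟩
  · intro t ht; exact (hinv t (by omega)).1
  · intro t ht; exact (hinv t (by omega)).2.1
  · intro t h1t htT
    have h := hstepF (t-1) (by omega)
    rw [show t - 1 + 1 = t from by omega] at h
    exact h.1
  · intro t h1t htT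
    have h := hstepF (t-1) (by omega)
    rw [show t - 1 + 1 = t from by omega] at h
    exact h.2.1
  · intro t ht; exact (hinv t (by omega)).2.2
  · show S1 (F 0).1 = 0
    rw [hF0]; exact h01
  · exact hT'N
  · intro t ht
    show S1 (F t).1 < N
    have hb := hbd1 (F t).1 (hinv t (by omega)).1
    have hne := hT'min t ht
    omega

lemma sync_aux (N : ℕ) : ∀ (n : ℕ) (T : Fin (n+1) → ℕ) (S : Fin (n+1) → ℕ → ℕ),
    (∀ i, ∀ t ≤ T i, S i t ≤ N) →
    (∀ i, ∀ t, 1 ≤ t → t ≤ T i → S i t = S i (t - 1) + 1 ∨ S i (t - 1) = S i t + 1) →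
    (∀ i, ∀ t < T i, S i t < N) →
    (∀ i, S i 0 = 0) → (∀ i, S i (T i) = N) →
    ∃ (T' : ℕ) (f : Fin (n+1) → ℕ → ℕ),
      (∀ i, ∀ t ≤ T', f i t ≤ T i) ∧
      (∀ i, ∀ t, 1 ≤ t → t ≤ T' → f i t = f i (t - 1) + 1 ∨ f i (t - 1) = f i t + 1) ∧
      (∀ t ≤ T', ∀ i j, S i (f i t) = S j (f j t)) ∧
      (∀ i, S i (f i 0) = 0) ∧ (∀ i, S i (f i T') = N) ∧
      (∀ t < T', S 0 (f 0 t) < N) := by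
  intro n
  induction n with
  | zero =>
    intro T S hbd hstep hlt h0 hT
    refine ⟨T 0, fun _ t => t, ?_, ?_, ?_, ?_, ?_, ?_⟩
    · intro i t ht
      have hi : i = 0 := Fin.fin_one_eq_zero _
      rw [hi]; exact ht
    · intro i t h1 h2
      left; dsimp only; omega
    · intro t ht i j
      have hi : i = 0 := Fin.fin_one_eq_zero _
      have hj : j = 0 := Fin.fin_one_eq_zero _
      rw [hi, hj]
    · intro i; exact h0 i
    · intro i
      have hi : i = 0 := Fin.fin_one_eq_zero _
      rw [hi]; exact hT 0
    · intro t ht; exact hlt 0 t ht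
  | succ n ih =>
    intro T S hbd hstep hlt h0 hT
    obtain ⟨T₂, g, hgbd, hgstep, hgmatch, hg0, hgT, hglt⟩ :=
      ih (fun i => T i.succ) (fun i => S i.succ) (fun i => hbd i.succ) (fun i => hstep i.succ)
        (fun i => hlt i.succ) (fun i => h0 i.succ) (fun i => hT i.succ)
    set H : ℕ → ℕ := fun t => S (0 : Fin (n+1)).succ (g 0 t) with hH
    have Hbd : ∀ t ≤ T₂, H t ≤ N := fun t ht => hbd _ _ (hgbd 0 t ht)
    have Hstep : ∀ t, 1 ≤ t → t ≤ T₂ → H t = H (t-1) + 1 ∨ H (t-1) = H t + 1 := by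
      intro t h1 h2
      rcases hgstep 0 t h1 h2 with h | h
      · have hs := hstep (0 : Fin (n+1)).succ (g 0 t) (by omega) (hgbd 0 t h2)
        rw [show g 0 t - 1 = g 0 (t-1) from by omega] at hs
        exact hs
      · have hs := hstep (0 : Fin (n+1)).succ (g 0 (t-1)) (by omega)
          (hgbd 0 (t-1) (by omega))
        rw [show g 0 (t-1) - 1 = g 0 t from by omega] at hs
        tauto
    have Hlt : ∀ t < T₂, H t < N := fun t ht => hglt t ht
    have H0 : H 0 = 0 := hg0 0
    have HT : H T₂ = N := hgT 0
    obtain ⟨T₃, f₁, f₂, hf1bd, hf2bd, hf1step, hf2step, hfmatch, hf0, hfT, hflt⟩ :=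
      two_sync N (T 0) T₂ (S 0) H (hbd 0) Hbd (hstep 0) Hstep (hlt 0) Hlt (h0 0) H0 (hT 0) HT
    have hkey : ∀ t ≤ T₃, ∀ i : Fin (n+2),
        S i ((Fin.cases f₁ (fun i t => g i (f₂ t)) : Fin (n+2) → ℕ → ℕ) i t)
          = S 0 (f₁ t) := by
      intro t ht i
      induction i using Fin.cases with
      | zero => simp only [Fin.cases_zero]
      | succ i =>
        simp only [Fin.cases_succ]
        have h1 : S i.succ (g i (f₂ t)) = S (0 : Fin (n+1)).succ (g 0 (f₂ t)) :=
          hgmatch (f₂ t) (hf2bd t ht) i 0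
        rw [h1]
        exact (hfmatch t ht).symm
    refine ⟨T₃, Fin.cases f₁ (fun i t => g i (f₂ t)), ?_, ?_, ?_, ?_, ?_, ?_⟩
    · intro i
      induction i using Fin.cases with
      | zero => simpa only [Fin.cases_zero] using hf1bd
      | succ i =>
        simp only [Fin.cases_succ]
        intro t ht
        exact hgbd i (f₂ t) (hf2bd t ht)
    · intro i
      induction i using Fin.cases with
      | zero => simpa only [Fin.cases_zero] using hf1step
      | succ i =>
        simp only [Fin.cases_succ]
        intro t h1 h2
        rcases hf2step t h1 h2 with h | h
        · have hs := hgstep i (f₂ t) (by omega) (hf2bd t h2)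
          rw [show f₂ t - 1 = f₂ (t-1) from by omega] at hs
          exact hs
        · have hs := hgstep i (f₂ (t-1)) (by omega) (hf2bd (t-1) (by omega))
          rw [show f₂ (t-1) - 1 = f₂ t from by omega] at hs
          tauto
    · intro t ht i j
      rw [hkey t ht i, hkey t ht j]
    · intro i
      rw [hkey 0 (by omega) i]
      exact hf0
    · intro i
      rw [hkey T₃ le_rfl i]
      exact hfT
    · intro t ht
      have hz := hkey t (by omega) 0
      rw [hz]
      exact hflt t ht

/-- walk synchronization: given `n` nearest-neighbor walks
`S i : {0,…,T i} → {0,…,N}` starting at `0`, staying strictly below `N` before their final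
time, and ending at `N`, there is a common time horizon `T'` and reparametrizations
`f i : {0,…,T'} → {0,…,T i}` moving by `±1` at each step, such that all the reparametrized
walks agree at all times, start at height `0` and end at height `N`. -/
theorem walk_synchronization (n N : ℕ) (hn : 0 < n) (T : Fin n → ℕ) (S : Fin n → ℕ → ℕ)
    (hbd : ∀ i, ∀ t ≤ T i, S i t ≤ N)
    (hstep : ∀ i, ∀ t, 1 ≤ t → t ≤ T i → S i t = S i (t - 1) + 1 ∨ S i (t - 1) = S i t + 1)
    (hlt : ∀ i, ∀ t < T i, S i t < N)
    (h0 : ∀ i, S i 0 = 0) (hT : ∀ i, S i (T i) = N) :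
    ∃ (T' : ℕ) (f : Fin n → ℕ → ℕ),
      (∀ i, ∀ t ≤ T', f i t ≤ T i) ∧
      (∀ i, ∀ t, 1 ≤ t → t ≤ T' →
        f i t = f i (t - 1) + 1 ∨ f i (t - 1) = f i t + 1) ∧
      (∀ t ≤ T', ∀ i j, S i (f i t) = S j (f j t)) ∧
      (∀ i, S i (f i 0) = 0) ∧ (∀ i, S i (f i T') = N) := by
  obtain ⟨m, rfl⟩ : ∃ m, n = m + 1 := ⟨n - 1, by omega⟩
  obtain ⟨T', f, h1, h2, h3, h4, h5, -⟩ := sync_aux N m T S hbd hstep hlt h0 hT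
  exact ⟨T', f, h1, h2, h3, h4, h5⟩
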